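/- Let ε ∈ (0,1), ℓ ∈ (0,1), m > 0 satisfy (3ℓ + mε/π)² ≤ 32ℓ. With τ(t) = ε − ℓt, a(t) = 4e^{τ(t)}, and u̲(ρ,t) = a(t)ρ/(ρ+τ(t)³), the inequality u̲_t − 4ρ u̲_{ρρ} − 2u̲_ρ (u̲ − mρ/(2π)) ≤ 0 holds for all ρ ∈ (0,1) and t ∈ (0,ε/ℓ). -/

import Mathlib

open Real

lemma stmt_7_aux (E W S T ρ ℓ m pi : ℝ) (hW : W ≠ 0) (hpi : pi ≠ 0) :
    (4 * (E * (-ℓ)) * ρ * W - (4 * E * ρ) * (3 * T^2 * (-ℓ))) / W^2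
      - 4*ρ * ((0 * W^2 - 4 * E * S * (2 * W^1 * 1)) / (W^2)^2)
      - 2 * (4 * E * S / W^2) * (4 * E * ρ / W - m*ρ/(2*pi))
    = (4 * E * ρ / W^3) * (-ℓ*W^2 + 3*ℓ*T^2*W + 8*S - 2*(4*E)*S + m*S*W/pi) := by
  field_simp
  ring

set_option maxHeartbeats 1000000 in
theorem stmt_7 (ε ℓ m : ℝ) (hε : ε ∈ Set.Ioo (0:ℝ) 1) (hℓ : ℓ ∈ Set.Ioo (0:ℝ) 1)
    (hm : 0 < m) (h2 : (3*ℓ + m*ε/π)^2 ≤ 32*ℓ) :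
    let τ : ℝ → ℝ := fun t => ε - ℓ*t
    let a : ℝ → ℝ := fun t => 4 * Real.exp (τ t)
    let u : ℝ → ℝ → ℝ := fun ρ t => a t * ρ / (ρ + (τ t)^3)
    ∀ ρ ∈ Set.Ioo (0:ℝ) 1, ∀ t ∈ Set.Ioo 0 (ε/ℓ),
      deriv (fun t' => u ρ t') t
        - 4*ρ * deriv (fun ρ' => deriv (fun ρ'' => u ρ'' t) ρ') ρ
        - 2 * deriv (fun ρ' => u ρ' t) ρ * (u ρ t - m*ρ/(2*π)) ≤ 0 := by
  intro τ a u ρ hρ t ht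
  obtain ⟨hε0, hε1⟩ := hε
  obtain ⟨hℓ0, hℓ1⟩ := hℓ
  obtain ⟨hρ0, hρ1⟩ := hρ
  obtain ⟨ht0, ht1⟩ := ht
  have hπ : (0:ℝ) < π := Real.pi_pos
  simp only [u, a, τ]
  have hT0 : 0 < ε - ℓ*t := by
    have h := (lt_div_iff₀ hℓ0).mp ht1
    nlinarith
  have hTε : ε - ℓ*t ≤ ε := by nlinarith
  set T := ε - ℓ*t with hTdef
  set S := T^3 with hSdef
  have hS0 : 0 < S := by positivity
  set W := ρ + S with hWdef
  have hW0 : 0 < W := by positivity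
  have hWne : W ≠ 0 := ne_of_gt hW0
  -- t-derivative
  have hτd : HasDerivAt (fun t' => ε - ℓ*t') (-ℓ) t := by
    simpa using ((hasDerivAt_id t).const_mul ℓ).const_sub ε
  have hN : HasDerivAt (fun t' => 4 * Real.exp (ε - ℓ*t') * ρ)
      (4 * (Real.exp T * (-ℓ)) * ρ) t := (hτd.exp.const_mul 4).mul_const ρ
  have hD : HasDerivAt (fun t' => ρ + (ε - ℓ*t')^3)
      (3 * T^2 * (-ℓ)) t := by
    have := (hτd.fun_pow 3).const_add ρ
    refine this.congr_deriv ?_; rw [hTdef]; norm_num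
  have hDt : HasDerivAt (fun t' => 4 * Real.exp (ε - ℓ*t') * ρ / (ρ + (ε - ℓ*t')^3))
      ((4 * (Real.exp T * (-ℓ)) * ρ * W - (4 * Real.exp T * ρ) * (3 * T^2 * (-ℓ))) / W^2)
      t := hN.div hD hWne
  have e1 : deriv (fun t' => 4 * Real.exp (ε - ℓ*t') * ρ / (ρ + (ε - ℓ*t')^3)) t
      = (4 * (Real.exp T * (-ℓ)) * ρ * W - (4 * Real.exp T * ρ) * (3 * T^2 * (-ℓ))) / W^2 :=
    hDt.deriv
  -- ρ-derivative (first)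
  have hder1 : ∀ x : ℝ, 0 < x + S →
      HasDerivAt (fun ρ'' => 4 * Real.exp T * ρ'' / (ρ'' + S))
        (4 * Real.exp T * S / (x + S)^2) x := by
    intro x hx
    have hnum : HasDerivAt (fun ρ'' => 4 * Real.exp T * ρ'') (4 * Real.exp T) x := by
      simpa using (hasDerivAt_id x).const_mul (4 * Real.exp T)
    have hden : HasDerivAt (fun ρ'' : ℝ => ρ'' + S) 1 x := by
      simpa using (hasDerivAt_id x).add_const S
    have := hnum.div hden (ne_of_gt hx)
    refine this.congr_deriv ?_
    ring
  have e2 : deriv (fun ρ' => 4 * Real.exp T * ρ' / (ρ' + S)) ρ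
      = 4 * Real.exp T * S / W^2 := by
    rw [hWdef]; exact (hder1 ρ hW0).deriv
  -- second ρ-derivative
  have hev : (deriv (fun ρ'' => 4 * Real.exp T * ρ'' / (ρ'' + S)))
      =ᶠ[nhds ρ] (fun x => 4 * Real.exp T * S / (x + S)^2) := by
    have hmem : Set.Ioi (-S) ∈ nhds ρ := Ioi_mem_nhds (by linarith)
    filter_upwards [hmem] with x hx
    have hx' : 0 < x + S := by
      rw [Set.mem_Ioi] at hx; linarith
    exact (hder1 x hx').deriv
  have hder2 : HasDerivAt (fun x => 4 * Real.exp T * S / (x + S)^2)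
      ((0 * W^2 - 4 * Real.exp T * S * (2 * W^1 * 1)) / (W^2)^2) ρ := by
    have hnum : HasDerivAt (fun _ : ℝ => 4 * Real.exp T * S) 0 ρ := hasDerivAt_const ρ _
    have hden : HasDerivAt (fun x : ℝ => (x + S)^2) (2 * (ρ+S)^1 * 1) ρ := by
      simpa using (((hasDerivAt_id ρ).add_const S).fun_pow 2)
    have h := hnum.div hden (by rw [← hWdef]; positivity)
    rw [← hWdef] at h
    exact h
  have e3 : deriv (fun ρ' => deriv (fun ρ'' => 4 * Real.exp T * ρ'' / (ρ'' + S)) ρ') ρ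
      = (0 * W^2 - 4 * Real.exp T * S * (2 * W^1 * 1)) / (W^2)^2 := by
    rw [hev.deriv_eq]
    exact hder2.deriv
  rw [e1, e2, e3,
    stmt_7_aux (Real.exp T) W S T ρ ℓ m π hWne (ne_of_gt hπ)]
  -- inequality
  have hexp : 4 * (1 + T) ≤ 4 * Real.exp T := by
    have := Real.add_one_le_exp T
    nlinarith
  have hB : -ℓ*W^2 + 3*ℓ*T^2*W + 8*S - 2*(4*Real.exp T)*S + m*S*W/π ≤ 0 := by
    have hPe : m*S*W/π = (m*T/π)*(T^2*W) := by
      rw [hSdef]; field_simp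
    rw [hPe]
    set P := m*T/π with hPdef
    set Q := m*ε/π with hQdef
    have hP0 : 0 ≤ P := by positivity
    have hPQ : P ≤ Q := by rw [hPdef, hQdef]; gcongr
    rw [hSdef]
    nlinarith [sq_nonneg (16*T^2 - (3*ℓ+Q)*W),
      mul_nonneg (sub_nonneg.mpr hexp) (pow_pos hT0 3).le,
      mul_nonneg (sub_nonneg.mpr hPQ) (mul_nonneg (sq_nonneg T) hW0.le),
      mul_nonneg (sub_nonneg.mpr h2) (sq_nonneg W)]
  exact mul_nonpos_of_nonneg_of_nonpos (by positivity) hB
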